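/- Let X be a compact Hausdorff topological space and let (ι, ≤) be a nonempty directed set. Let (f_j)_{j∈ι} be a net of upper semicontinuous functions f_j : X → ℝ that is pointwise decreasing (j ≤ k implies f_k(x) ≤ f_j(x) for all x ∈ X) and uniformly bounded (there is C > 0 with |f_j(x)| ≤ C for all j and all x), and assume that f_j converges pointwise to a function f : X → ℝ. Let (μ_j)_{j∈ι} be a net of finite Borel measures on X converging weakly to a finite regular Borel measure μ, i.e. ∫ g dμ_j → ∫ g dμ along the atTop filter on ι for every continuous g : X → ℝ. Then limsup_j ∫_X f_j dμ_j ≤ ∫_X f dμ. -/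

import Mathlib

open Filter MeasureTheory Set

lemma stmt0_aux_open {X : Type*} [TopologicalSpace X] {u v : X → ℝ}
    (hu : UpperSemicontinuous u) (hv : LowerSemicontinuous v) :
    IsOpen {x | u x < v x} := by
  have : {x | u x < v x} = ⋃ q : ℚ, ({x | u x < (q : ℝ)} ∩ {x | (q : ℝ) < v x}) := by
    ext x
    simp only [mem_setOf_eq, mem_iUnion, mem_inter_iff]
    constructor
    · intro h
      obtain ⟨q, hq1, hq2⟩ := exists_rat_btwn h
      exact ⟨q, hq1, hq2⟩
    · rintro ⟨q, h1, h2⟩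
      exact h1.trans h2
  rw [this]
  exact isOpen_iUnion fun q =>
    ((upperSemicontinuous_iff_isOpen_preimage.1 hu _).inter
      (lowerSemicontinuous_iff_isOpen_preimage.1 hv _))

/-- For a decreasing, uniformly bounded net of usc functions `f j`
converging pointwise to `flim`, and a net of finite Borel measures `μ j`
converging weakly to a finite regular Borel measure `μlim`, we have
`limsup_j ∫ f_j dμ_j ≤ ∫ flim dμlim`. -/
theorem stmt0
    {X : Type*} [TopologicalSpace X] [CompactSpace X] [T2Space X]
    [MeasurableSpace X] [BorelSpace X]
    {ι : Type*} [Preorder ι] [Nonempty ι] [IsDirected ι (· ≤ ·)]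
    (f : ι → X → ℝ) (flim : X → ℝ)
    (husc : ∀ j, UpperSemicontinuous (f j))
    (hdec : ∀ j k, j ≤ k → ∀ x, f k x ≤ f j x)
    (hbdd : ∃ C > 0, ∀ j x, |f j x| ≤ C)
    (hptwise : ∀ x, Tendsto (fun j => f j x) atTop (nhds (flim x)))
    (μ : ι → Measure X) (hfin : ∀ j, IsFiniteMeasure (μ j))
    (μlim : Measure X) [IsFiniteMeasure μlim] [μlim.OuterRegular] [μlim.InnerRegular]
    (hweak : ∀ g : C(X, ℝ),
      Tendsto (fun j => ∫ x, g x ∂(μ j)) atTop (nhds (∫ x, g x ∂μlim))) :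
    limsup (fun j => ∫ x, f j x ∂(μ j)) atTop ≤ ∫ x, flim x ∂μlim := by
  haveI hne : (atTop : Filter ι).NeBot := atTop_neBot_iff.2 ⟨‹_›, ‹_›⟩
  obtain ⟨C, hCpos, hbC⟩ := hbdd
  -- dispose of the empty case
  rcases isEmpty_or_nonempty X with hX | hX
  · have h0 : ∀ (ν : Measure X) (u : X → ℝ), ∫ x, u x ∂ν = 0 := by
      intro ν u
      rw [Measure.eq_zero_of_isEmpty ν, integral_zero_measure]
    simp only [h0]
    simp [limsup_const]
  -- basic facts
  have hflim_le : ∀ j x, flim x ≤ f j x := fun j x =>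
    le_of_tendsto (hptwise x) (eventually_atTop.2 ⟨j, fun k hk => hdec j k hk x⟩)
  have hflimC : ∀ x, |flim x| ≤ C := fun x =>
    le_of_tendsto ((hptwise x).abs) (Eventually.of_forall fun j => hbC j x)
  have husc_lim : UpperSemicontinuous flim := by
    intro x c hc
    obtain ⟨j, hj⟩ := ((hptwise x).eventually_lt_const hc).exists
    exact (husc j x c hj).mono fun y hy => lt_of_le_of_lt (hflim_le j y) hy
  -- integrability helper
  have hint : ∀ (ν : Measure X) [IsFiniteMeasure ν] (u : X → ℝ) (B : ℝ),
      Measurable u → (∀ x, |u x| ≤ B) → Integrable u ν := by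
    intro ν _ u B hu hB
    exact (integrable_const B).mono' hu.aestronglyMeasurable
      (Eventually.of_forall fun x => by simpa [Real.norm_eq_abs] using hB x)
  haveI : μlim.WeaklyRegular := by
    constructor
    intro U hU r hr
    obtain ⟨K, hKU, hK, hrK⟩ :=
      (inferInstance : μlim.InnerRegular).innerRegular hU.measurableSet r hr
    exact ⟨K, hKU, hK.isClosed, hrK⟩
  have hflim_int : Integrable flim μlim := hint _ _ C husc_lim.measurable hflimC
  have key : ∀ ε > (0:ℝ),
      limsup (fun j => ∫ x, f j x ∂(μ j)) atTop ≤ (∫ x, flim x ∂μlim) + ε := by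
    intro ε hε
    obtain ⟨g, hg_lt, hg_lsc, hg_int, hg_top, hg_intlt⟩ :=
      exists_lt_lowerSemicontinuous_integral_lt flim hflim_int (half_pos hε)
    set D : ℝ := C + 1 with hD
    have hCD : C < D := by simp [hD]
    -- the truncation of g
    set g2 : X → ℝ := fun x => ((g x) ⊓ ((D : ℝ) : EReal)).toReal with hg2def
    have hne_top : ∀ x, (g x) ⊓ ((D : ℝ) : EReal) ≠ ⊤ :=
      fun x => ((min_le_right _ _).trans_lt (EReal.coe_lt_top D)).ne
    have hne_bot : ∀ x, (g x) ⊓ ((D : ℝ) : EReal) ≠ ⊥ := by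
      intro x
      refine (lt_min ?_ ?_).ne'
      · exact (EReal.bot_lt_coe (flim x)).trans (hg_lt x)
      · exact EReal.bot_lt_coe D
    have hg2coe : ∀ x, ((g2 x : ℝ) : EReal) = (g x) ⊓ ((D : ℝ) : EReal) :=
      fun x => EReal.coe_toReal (hne_top x) (hne_bot x)
    have hflim_lt_g2 : ∀ x, flim x < g2 x := by
      intro x
      have h1 : ((flim x : ℝ) : EReal) < (g x) ⊓ ((D : ℝ) : EReal) := by
        refine lt_min (hg_lt x) ?_
        exact_mod_cast (abs_le.1 (hflimC x)).2.trans_lt hCD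
      rw [← hg2coe x] at h1
      exact_mod_cast h1
    have hg2_le_D : ∀ x, g2 x ≤ D := by
      intro x
      have : ((g2 x : ℝ) : EReal) ≤ ((D : ℝ) : EReal) := by
        rw [hg2coe x]; exact min_le_right _ _
      exact_mod_cast this
    have hg2_abs : ∀ x, |g2 x| ≤ D := by
      intro x
      refine abs_le.2 ⟨?_, hg2_le_D x⟩
      have := hflim_lt_g2 x
      have h2 := (abs_le.1 (hflimC x)).1
      linarith
    have hg2_lsc : LowerSemicontinuous g2 := by
      rw [lowerSemicontinuous_iff_isOpen_preimage]
      intro c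
      rcases lt_or_ge c D with hcD | hcD
      · have : g2 ⁻¹' Ioi c = g ⁻¹' Ioi ((c : ℝ) : EReal) := by
          ext x
          simp only [mem_preimage, mem_Ioi]
          constructor
          · intro h
            have : ((c : ℝ) : EReal) < (g x) ⊓ ((D : ℝ) : EReal) := by
              rw [← hg2coe x]; exact_mod_cast h
            exact lt_of_lt_of_le this (min_le_left _ _)
          · intro h
            have : ((c : ℝ) : EReal) < (g x) ⊓ ((D : ℝ) : EReal) :=
              lt_min h (by exact_mod_cast hcD)
            rw [← hg2coe x] at this
            exact_mod_cast this
        rw [this]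
        exact lowerSemicontinuous_iff_isOpen_preimage.1 hg_lsc _
      · have : g2 ⁻¹' Ioi c = ∅ := by
          ext x
          simp only [mem_preimage, mem_Ioi, mem_empty_iff_false, iff_false, not_lt]
          exact (hg2_le_D x).trans hcD
        rw [this]; exact isOpen_empty
    have hg2_int : Integrable g2 μlim := hint _ _ D hg2_lsc.measurable hg2_abs
    have hg2_le_toReal : ∀ᵐ x ∂μlim, g2 x ≤ (g x).toReal := by
      filter_upwards [hg_top] with x hx
      exact EReal.toReal_le_toReal (min_le_left _ _) (hne_bot x) hx.ne
    have hg2_intle : ∫ x, g2 x ∂μlim ≤ ∫ x, (g x).toReal ∂μlim :=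
      integral_mono_ae hg2_int hg_int hg2_le_toReal
    -- Dini argument I: find k0 with f k0 < g2 everywhere
    have hUopen : ∀ j, IsOpen {x | f j x < g2 x} := fun j => stmt0_aux_open (husc j) hg2_lsc
    have hcover : ∀ x, ∃ j, f j x < g2 x := fun x =>
      ((hptwise x).eventually_lt_const (hflim_lt_g2 x)).exists
    obtain ⟨t, ht⟩ := isCompact_univ.elim_finite_subcover (fun j => {x | f j x < g2 x})
      hUopen (fun x _ => mem_iUnion.2 (hcover x))
    obtain ⟨k0, hk0⟩ := (t.finite_toSet).exists_le
    have hk0lt : ∀ x, f k0 x < g2 x := by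
      intro x
      obtain ⟨j, hjt, hj⟩ := by simpa using ht (mem_univ x)
      exact lt_of_le_of_lt (hdec j k0 (hk0 j hjt) x) hj
    -- Dini argument II: continuous functions above f k0, below g2 at a point
    have hpsi : ∀ x : X, ∃ ψ : C(X, ℝ), (∀ y, f k0 y ≤ ψ y) ∧ ψ x < g2 x := by
      intro x
      set c' : ℝ := (f k0 x + g2 x) / 2 with hc'
      have hc1 : f k0 x < c' := by have := hk0lt x; rw [hc']; linarith
      have hc2 : c' < g2 x := by have := hk0lt x; rw [hc']; linarith
      have hc'D : c' ≤ D := (hc2.le).trans (hg2_le_D x)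
      have hUo : IsOpen {y | f k0 y < c'} :=
        upperSemicontinuous_iff_isOpen_preimage.1 (husc k0) c'
      obtain ⟨φ, hφ0, hφ1, hφmem⟩ := exists_continuous_zero_one_of_isClosed
        (isClosed_singleton (x := x)) hUo.isClosed_compl
        (by
          rw [Set.disjoint_left]
          intro y hy hyc
          rw [mem_singleton_iff] at hy
          subst hy
          exact hyc hc1)
      refine ⟨⟨fun y => c' + (D - c') * φ y, continuous_const.add (continuous_const.mul φ.continuous)⟩, ?_, ?_⟩
      · intro y
        by_cases hy : f k0 y < c'
        · have h1 : 0 ≤ φ y := (hφmem y).1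
          have h2 : 0 ≤ D - c' := by linarith
          simp only [ContinuousMap.coe_mk]
          nlinarith
        · have : φ y = 1 := hφ1 (by simpa using hy)
          simp only [ContinuousMap.coe_mk, this, mul_one]
          have := (abs_le.1 (hbC k0 y)).2
          linarith
      · have : φ x = 0 := hφ0 rfl
        simp only [ContinuousMap.coe_mk, this, mul_zero, add_zero]
        exact hc2
    choose ψ hψ1 hψ2 using hpsi
    have hWopen : ∀ x : X, IsOpen {y | ψ x y < g2 y} := fun x =>
      stmt0_aux_open ((ψ x).continuous.upperSemicontinuous) hg2_lsc
    obtain ⟨t2, ht2⟩ := isCompact_univ.elim_finite_subcover (fun x => {y | ψ x y < g2 y})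
      hWopen (fun x _ => mem_iUnion.2 ⟨x, hψ2 x⟩)
    have ht2ne : t2.Nonempty := by
      rcases Finset.eq_empty_or_nonempty t2 with h | h
      · exfalso
        obtain ⟨x⟩ := hX
        have := ht2 (mem_univ x)
        simp [h] at this
      · exact h
    set h : C(X, ℝ) := t2.inf' ht2ne ψ with hhdef
    have hh_apply : ∀ y, h y = t2.inf' ht2ne (fun x => ψ x y) := by
      intro y; rw [hhdef, ContinuousMap.inf'_apply]
    have hfk0_le_h : ∀ y, f k0 y ≤ h y := by
      intro y
      rw [hh_apply y]
      exact Finset.le_inf' ht2ne _ fun x _ => hψ1 x y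
    have hh_lt_g2 : ∀ y, h y < g2 y := by
      intro y
      obtain ⟨x, hxt, hx⟩ := by simpa using ht2 (mem_univ y)
      rw [hh_apply y]
      exact lt_of_le_of_lt (Finset.inf'_le _ hxt) hx
    have hh_abs : ∀ y, |h y| ≤ D := by
      intro y
      refine abs_le.2 ⟨?_, (hh_lt_g2 y).le.trans (hg2_le_D y)⟩
      have h1 := (abs_le.1 (hbC k0 y)).1
      have := hfk0_le_h y
      simp only [hD]
      linarith
    have hh_int : ∀ (ν : Measure X) [IsFiniteMeasure ν], Integrable (fun y => h y) ν :=
      fun ν _ => hint _ _ D h.continuous.measurable hh_abs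
    -- weak convergence applied to h
    have hhweak := hweak h
    have hev1 : ∀ᶠ j in atTop, ∫ x, h x ∂(μ j) ≤ (∫ x, h x ∂μlim) + ε / 2 :=
      (hhweak.eventually_lt_const (lt_add_of_pos_right _ (half_pos hε))).mono
        fun j hj => hj.le
    have hev2 : ∀ᶠ j in atTop, ∫ x, f j x ∂(μ j) ≤ ∫ x, h x ∂(μ j) := by
      refine eventually_atTop.2 ⟨k0, fun j hj => ?_⟩
      haveI := hfin j
      exact integral_mono (hint _ _ C (husc j).measurable (hbC j)) (hh_int _)
        fun x => (hdec k0 j hj x).trans (hfk0_le_h x)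
    -- coboundedness
    have hmass : Tendsto (fun j => ((μ j) univ).toReal) atTop (nhds ((μlim univ).toReal)) := by
      have := hweak (ContinuousMap.const X 1)
      simpa [integral_const, Measure.real] using this
    have hcob : IsCoboundedUnder (· ≤ ·) (atTop : Filter ι)
        (fun j => ∫ x, f j x ∂(μ j)) := by
      refine Filter.isCoboundedUnder_le_of_eventually_le (atTop : Filter ι)
        (x := -(C * ((μlim univ).toReal + 1))) ?_
      filter_upwards [hmass.eventually_lt_const (lt_add_one _)] with j hj
      haveI := hfin j
      have h1 : ∫ x, (-C : ℝ) ∂(μ j) ≤ ∫ x, f j x ∂(μ j) :=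
        integral_mono (integrable_const _) (hint _ _ C (husc j).measurable (hbC j))
          fun x => (abs_le.1 (hbC j x)).1
      rw [integral_const, smul_eq_mul, Measure.real] at h1
      have h2 : (0:ℝ) ≤ ((μ j) univ).toReal := ENNReal.toReal_nonneg
      nlinarith [h1, hj, hCpos]
    have hlimsup : limsup (fun j => ∫ x, f j x ∂(μ j)) atTop ≤ (∫ x, h x ∂μlim) + ε / 2 := by
      apply limsup_le_of_le hcob
      filter_upwards [hev1, hev2] with j h1 h2
      exact h2.trans h1
    have hfin2 : ∫ x, h x ∂μlim ≤ ∫ x, g2 x ∂μlim :=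
      integral_mono (hh_int _) hg2_int fun x => (hh_lt_g2 x).le
    have := hg_intlt
    calc limsup (fun j => ∫ x, f j x ∂(μ j)) atTop
        ≤ (∫ x, h x ∂μlim) + ε / 2 := hlimsup
      _ ≤ (∫ x, flim x ∂μlim) + ε := by
          have := hg2_intle
          linarith
  -- conclude
  by_contra hcon
  push_neg at hcon
  have := key ((limsup (fun j => ∫ x, f j x ∂(μ j)) atTop - ∫ x, flim x ∂μlim) / 2)
    (by linarith)
  linarith
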